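/- Let ε < 0 be a real constant. Then the function u(t,x) = −2√(-10ε)·(3·tanh(x + 24εt)² − 2) satisfies the equation u_t + u² u_x + ε u_{xxxxx} = 0 for all (t,x) ∈ ℝ². -/

import Mathlib

lemma hasDerivAt_tanh (x : ℝ) :
    HasDerivAt Real.tanh (1 - Real.tanh x ^ 2) x := by
  have h := (Real.hasDerivAt_sinh x).div (Real.hasDerivAt_cosh x) (Real.cosh_pos x).ne'
  have heq : (Real.cosh x * Real.cosh x - Real.sinh x * Real.sinh x) / Real.cosh x ^ 2
      = 1 - Real.tanh x ^ 2 := by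
    rw [Real.tanh_eq_sinh_div_cosh]
    have h1 : Real.cosh x ^ 2 - Real.sinh x ^ 2 = 1 := Real.cosh_sq_sub_sinh_sq x
    field_simp
  have : (Real.sinh / Real.cosh) = Real.tanh := by
    funext y; rw [Pi.div_apply, Real.tanh_eq_sinh_div_cosh]
  rw [this, heq] at h
  exact h

lemma hasDerivAt_tanh_shift (a x : ℝ) :
    HasDerivAt (fun y => Real.tanh (y + a)) (1 - Real.tanh (x + a) ^ 2) x := by
  have h := (hasDerivAt_tanh (x + a)).comp x ((hasDerivAt_id x).add_const a)
  simpa [Function.comp_def] using h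

/-- Travelling-wave solution (with `−` sign) of `u_t + u² u_x + ε u_{xxxxx} = 0`, `ε < 0`. -/
theorem stmt_2 (ε : ℝ) (hε : ε < 0)
    (u : ℝ → ℝ → ℝ)
    (hu : ∀ t x : ℝ, u t x =
      -2 * Real.sqrt (-10 * ε) * (3 * (Real.tanh (x + 24 * ε * t)) ^ 2 - 2)) :
    ∀ t x : ℝ,
      deriv (fun s => u s x) t + (u t x) ^ 2 * deriv (fun y => u t y) x
        + ε * iteratedDeriv 5 (fun y => u t y) x = 0 := by
  intro t x
  set c : ℝ := -2 * Real.sqrt (-10 * ε) with hc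
  have hc2 : c ^ 2 = -40 * ε := by
    have : Real.sqrt (-10 * ε) ^ 2 = -10 * ε :=
      Real.sq_sqrt (by linarith)
    rw [hc]; nlinarith [this]
  set a : ℝ := 24 * ε * t with ha
  -- spatial function and its derivatives
  set T : ℝ → ℝ := fun y => Real.tanh (y + a) with hT
  have hTd : ∀ y : ℝ, HasDerivAt T (1 - T y ^ 2) y := fun y => hasDerivAt_tanh_shift a y
  set F0 : ℝ → ℝ := fun y => c * (3 * T y ^ 2 - 2) with hF0
  set F1 : ℝ → ℝ := fun y => c * (6 * T y - 6 * T y ^ 3) with hF1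
  set F2 : ℝ → ℝ := fun y => c * (6 - 24 * T y ^ 2 + 18 * T y ^ 4) with hF2
  set F3 : ℝ → ℝ := fun y => c * (-48 * T y + 120 * T y ^ 3 - 72 * T y ^ 5) with hF3
  set F4 : ℝ → ℝ := fun y => c * (-48 + 408 * T y ^ 2 - 720 * T y ^ 4 + 360 * T y ^ 6) with hF4
  have h0 : ∀ y : ℝ, HasDerivAt F0 (F1 y) y := by
    intro y
    have h := (((hTd y).pow 2).const_mul 3 |>.sub_const 2).const_mul c
    convert h using 1
    show c * (6 * T y - 6 * T y ^ 3) = _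
    push_cast; ring
    rfl
    rfl
    funext z; rfl
  have h1 : ∀ y : ℝ, HasDerivAt F1 (F2 y) y := by
    intro y
    have h := (((hTd y).const_mul 6).sub (((hTd y).pow 3).const_mul 6)).const_mul c
    convert h using 1
    show c * (6 - 24 * T y ^ 2 + 18 * T y ^ 4) = _
    push_cast; ring
    rfl
    rfl
    funext z; rfl
  have h2 : ∀ y : ℝ, HasDerivAt F2 (F3 y) y := by
    intro y
    have h := (((((hTd y).pow 2).const_mul 24).neg.const_add 6).add
      (((hTd y).pow 4).const_mul 18)).const_mul c
    convert h using 1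
    show c * (-48 * T y + 120 * T y ^ 3 - 72 * T y ^ 5) = _
    push_cast; ring
    rfl
    rfl
    funext z; show c * (6 - 24 * T z ^ 2 + 18 * T z ^ 4) = c * (6 + -(24 * T z ^ 2) + 18 * T z ^ 4); ring
  have h3 : ∀ y : ℝ, HasDerivAt F3 (F4 y) y := by
    intro y
    have h := ((((hTd y).const_mul (-48)).add (((hTd y).pow 3).const_mul 120)).sub
      (((hTd y).pow 5).const_mul 72)).const_mul c
    convert h using 1
    show c * (-48 + 408 * T y ^ 2 - 720 * T y ^ 4 + 360 * T y ^ 6) = _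
    push_cast; ring
    rfl
    rfl
    funext z; rfl
  have h4 : HasDerivAt F4
      (c * (816 * T x - 3696 * T x ^ 3 + 5040 * T x ^ 5 - 2160 * T x ^ 7)) x := by
    have h := (((((hTd x).pow 2).const_mul 408).const_add (-48)).sub
      (((hTd x).pow 4).const_mul 720) |>.add (((hTd x).pow 6).const_mul 360)).const_mul c
    convert h using 1
    show c * (816 * T x - 3696 * T x ^ 3 + 5040 * T x ^ 5 - 2160 * T x ^ 7) = _
    push_cast; ring
    rfl
    rfl
    funext z; rfl
  -- the spatial slice equals F0
  have hux : (fun y => u t y) = F0 := by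
    funext y; rw [hu t y]
  -- first spatial derivative
  have hdx : deriv (fun y => u t y) x = F1 x := by
    rw [hux]; exact (h0 x).deriv
  -- function-level deriv identities
  have d0 : deriv F0 = F1 := funext fun y => (h0 y).deriv
  have d1 : deriv F1 = F2 := funext fun y => (h1 y).deriv
  have d2 : deriv F2 = F3 := funext fun y => (h2 y).deriv
  have d3 : deriv F3 = F4 := funext fun y => (h3 y).deriv
  have h5 : iteratedDeriv 5 (fun y => u t y) x
      = c * (816 * T x - 3696 * T x ^ 3 + 5040 * T x ^ 5 - 2160 * T x ^ 7) := by
    rw [hux]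
    rw [show (5 : ℕ) = 4 + 1 from rfl, iteratedDeriv_succ,
      show (4 : ℕ) = 3 + 1 from rfl, iteratedDeriv_succ,
      show (3 : ℕ) = 2 + 1 from rfl, iteratedDeriv_succ,
      show (2 : ℕ) = 1 + 1 from rfl, iteratedDeriv_succ,
      iteratedDeriv_one, d0, d1, d2, d3]
    exact h4.deriv
  -- time derivative
  have hdt : deriv (fun s => u s x) t = c * (6 * T x - 6 * T x ^ 3) * (24 * ε) := by
    have hteq : (fun s => u s x) = fun s => c * (3 * Real.tanh (x + 24 * ε * s) ^ 2 - 2) := by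
      funext s; rw [hu s x]
    rw [hteq]
    have hin : HasDerivAt (fun s : ℝ => x + 24 * ε * s) (24 * ε) t := by
      simpa using ((hasDerivAt_id t).const_mul (24 * ε)).const_add x
    have htanh := (hasDerivAt_tanh (x + 24 * ε * t)).comp t hin
    have h := (((htanh.pow 2).const_mul 3).sub_const 2).const_mul c
    simp only [Function.comp_def] at h
    rw [show deriv (fun s => c * (3 * Real.tanh (x + 24 * ε * s) ^ 2 - 2)) t = _ from h.deriv]
    have hTx : T x = Real.tanh (x + 24 * ε * t) := rfl
    rw [hTx]
    push_cast; ring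
  rw [hdt, hdx, h5, hu t x]
  have hTx : T x = Real.tanh (x + 24 * ε * t) := by simp [hT, ha]
  have hF1x : F1 x = c * (6 * T x - 6 * T x ^ 3) := rfl
  rw [← hTx, hF1x]
  linear_combination (c * (3 * T x ^ 2 - 2) ^ 2 * (6 * T x - 6 * T x ^ 3)) * hc2
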